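/- Let a_n = ZFib[n] / log_φ(n) for n ≥ 2, where φ is the golden ratio and ZFib[n] is the Zimin type of the length-n prefix of the infinite Fibonacci word. Then limsup_{n→∞} a_n = 1/2. -/

import Mathlib

open List Filter

/-- The Zimin pattern `Z_k` as a word over variables `0, 1, ..., k-1`
(`Z_0` is empty, `Z_{k+1} = Z_k · x_{k+1} · Z_k`). -/
def ziminWord : ℕ → List ℕ
  | 0 => []
  | k + 1 => ziminWord k ++ k :: ziminWord k

/-- `w` is the image of the Zimin pattern `Z_k` under a non-erasing morphism. -/
def IsZiminImage {α : Type*} (k : ℕ) (w : List α) : Prop :=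
  ∃ h : ℕ → List α, (∀ i, h i ≠ []) ∧ w = (ziminWord k).flatMap h

/-- The Zimin type of `w`: the maximum `k` such that `w` is an image of `Z_k`
under a non-erasing morphism (0 for the empty word). -/
noncomputable def ziminType {α : Type*} (w : List α) : ℕ :=
  sSup {k | IsZiminImage k w}

/-- The Zimin pattern `Z_k` embeds in `w`: some factor of `w` is an image of `Z_k`. -/
def ziminEmbeds {α : Type*} (k : ℕ) (w : List α) : Prop :=
  ∃ u : List α, u <:+: w ∧ IsZiminImage k u

/-- Length of the longest border (proper prefix that is also a proper suffix) of `w`. -/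
noncomputable def bordLen {α : Type*} (w : List α) : ℕ :=
  sSup {j | w.take j <:+ w ∧ j < w.length}

/-- Length of the longest short border (border of length `< |w|/2`) of `w`. -/
noncomputable def shortBordLen {α : Type*} (w : List α) : ℕ :=
  sSup {j | w.take j <:+ w ∧ 2 * j < w.length}

/-- The longest border of `w`. -/
noncomputable def bord {α : Type*} (w : List α) : List α := w.take (bordLen w)

/-- The longest short border of `w`. -/
noncomputable def shortBord {α : Type*} (w : List α) : List α := w.take (shortBordLen w)

/-- The Fibonacci words over `Bool` (`a = false`, `b = true`), with
`fibWord 0 = F_0 = a`, `fibWord 1 = F_1 = F_0 F_{-1} = ab`, `F_{n} = F_{n-1} F_{n-2}`. -/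
def fibWord : ℕ → List Bool
  | 0 => [false]
  | 1 => [false, true]
  | n + 2 => fibWord (n + 1) ++ fibWord n

/-- The Fibonacci numbers `Φ_n = |F_n|` (`Φ_0 = 1, Φ_1 = 2, Φ_2 = 3, ...`). -/
def Phi (n : ℕ) : ℕ := (fibWord n).length

/-- The infinite Fibonacci word `F_∞` (0-indexed letters). -/
def fibInf (i : ℕ) : Bool := (fibWord (i + 2)).getD i false

/-- The prefix `F_∞[1..n]` of the infinite Fibonacci word. -/
def fibPrefix (n : ℕ) : List Bool := (List.range n).map fibInf


/-- The golden ratio `φ = (1 + √5)/2`. -/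
noncomputable def goldenR : ℝ := (1 + Real.sqrt 5) / 2

/-- The sequence `a_n = ZFib[n] / log_φ n`, where `ZFib[n]` is the Zimin type of
the length-`n` prefix of the infinite Fibonacci word. -/
noncomputable def aseq (n : ℕ) : ℝ :=
  (ziminType (fibPrefix n) : ℝ) / (Real.log n / Real.log goldenR)

lemma fibWord_succ_succ (n : ℕ) : fibWord (n+2) = fibWord (n+1) ++ fibWord n := rfl

lemma Phi_zero : Phi 0 = 1 := rfl
lemma Phi_one : Phi 1 = 2 := rfl
lemma Phi_add (n : ℕ) : Phi (n+2) = Phi (n+1) + Phi n := by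
  simp [Phi, fibWord_succ_succ]

lemma Phi_pos (n : ℕ) : 1 ≤ Phi n := by
  induction n using Nat.strong_induction_on with
  | _ n ih =>
    match n with
    | 0 => exact le_refl 1
    | 1 => norm_num [Phi_one]
    | n+2 => rw [Phi_add]; have := ih n (by omega); omega

lemma Phi_lt (n : ℕ) : Phi n < Phi (n+1) := by
  match n with
  | 0 => norm_num [Phi_zero, Phi_one]
  | n+1 => rw [Phi_add]; have := Phi_pos n; omega

lemma Phi_mono {m n : ℕ} (h : m ≤ n) : Phi m ≤ Phi n := by
  induction n with
  | zero => simp_all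
  | succ n ih =>
    rcases Nat.lt_or_ge m (n+1) with h'|h'
    · exact le_trans (ih (by omega)) (Phi_lt n).le
    · have : m = n+1 := by omega
      simp [this]

lemma Phi_ge (n : ℕ) : n + 1 ≤ Phi n := by
  induction n with
  | zero => simp [Phi_zero]
  | succ n ih => have := Phi_mono (Nat.le_succ n); have := Phi_lt n; omega

lemma fibWord_prefix (n : ℕ) : fibWord n <+: fibWord (n+1) := by
  match n with
  | 0 => decide
  | n+1 => rw [fibWord_succ_succ]; exact prefix_append _ _

lemma fibWord_prefix_le {m n : ℕ} (h : m ≤ n) : fibWord m <+: fibWord n := by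
  induction n with
  | zero => simp_all
  | succ n ih =>
    rcases Nat.lt_or_ge m (n+1) with h'|h'
    · exact (ih (by omega)).trans (fibWord_prefix n)
    · have : m = n+1 := by omega
      simp [this]

lemma fibInf_eq {i n : ℕ} (h : i < Phi n) : fibInf i = (fibWord n).getD i false := by
  unfold fibInf
  have hi : i < (fibWord n).length := h
  have hi2 : i < (fibWord (i+2)).length := by
    have h3 := Phi_ge (i+2); show i < Phi (i+2); omega
  rcases Nat.le_total n (i+2) with h'|h'
  · have hp := fibWord_prefix_le h'
    rw [getD_eq_getElem _ _ hi, getD_eq_getElem _ _ hi2, hp.getElem hi]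
  · have hp := fibWord_prefix_le h'
    rw [getD_eq_getElem _ _ hi, getD_eq_getElem _ _ hi2, hp.getElem hi2]

lemma fibPrefix_length (n : ℕ) : (fibPrefix n).length = n := by simp [fibPrefix]

lemma fibPrefix_getElem {n i : ℕ} (h : i < n) :
    (fibPrefix n)[i]'(by simpa [fibPrefix_length]) = fibInf i := by
  simp [fibPrefix]

lemma fibPrefix_phi (n : ℕ) : fibPrefix (Phi n) = fibWord n := by
  apply List.ext_getElem (by simp [fibPrefix_length, Phi])
  intro i h1 h2
  rw [fibPrefix_getElem (by simpa [fibPrefix_length] using h1)]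
  rw [fibInf_eq (show i < Phi n from h2), getD_eq_getElem _ _ h2]

lemma fibPrefix_take {b n : ℕ} (h : b ≤ n) : (fibPrefix n).take b = fibPrefix b := by
  apply List.ext_getElem (by simp [fibPrefix_length]; omega)
  intro i h1 h2
  rw [List.getElem_take]
  rw [fibPrefix_getElem (by simp [fibPrefix_length] at h1 h2 ⊢; omega)]
  rw [fibPrefix_getElem (by simp [fibPrefix_length] at h1 h2 ⊢; omega)]

/-- `fibInf` restricted to `[0,n)` has period `p`. -/
def HasPer (n p : ℕ) : Prop := ∀ i, i + p < n → fibInf (i + p) = fibInf i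

lemma HasPer.mono {n m p : ℕ} (h : HasPer n p) (hmn : m ≤ n) : HasPer m p :=
  fun i hi => h i (lt_of_lt_of_le hi hmn)

lemma take_comm (j : ℕ) :
    (fibWord (j+1) ++ fibWord j).take (Phi (j+2) - 2) =
      (fibWord j ++ fibWord (j+1)).take (Phi (j+2) - 2) := by
  induction j with
  | zero => decide
  | succ j ih =>
    have h1 : fibWord (j+2) ++ fibWord (j+1) = fibWord (j+1) ++ (fibWord j ++ fibWord (j+1)) := by
      rw [fibWord_succ_succ, append_assoc]
    have h2 : fibWord (j+1) ++ fibWord (j+2) = fibWord (j+1) ++ (fibWord (j+1) ++ fibWord j) := by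
      rw [fibWord_succ_succ]
    have harith : Phi (j+3) - 2 = (fibWord (j+1)).length + (Phi (j+2) - 2) := by
      show Phi (j+3) - 2 = Phi (j+1) + (Phi (j+2) - 2)
      have : Phi (j+3) = Phi (j+2) + Phi (j+1) := Phi_add (j+1)
      have h2 : 2 ≤ Phi (j+2) := by
        have := Phi_mono (show 1 ≤ j+2 by omega); rw [Phi_one] at this; omega
      omega
    rw [h1, h2, harith, List.take_length_add_append, List.take_length_add_append, ih]

lemma per_fib (j : ℕ) : HasPer (Phi (j+2) - 2) (Phi j) := by
  intro i hi
  have h2 : 2 ≤ Phi (j+2) := by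
    have := Phi_mono (show 1 ≤ j+2 by omega); rw [Phi_one] at this; omega
  have hadd := Phi_add j
  have hlen : (fibWord (j+1) ++ fibWord j).length = Phi (j+2) := by
    simp only [length_append]; show Phi (j+1) + Phi j = _; omega
  have hlen' : (fibWord j ++ fibWord (j+1)).length = Phi (j+2) := by
    simp only [length_append]; show Phi j + Phi (j+1) = _; omega
  have hip : i + Phi j < Phi (j+2) := by omega
  have hi1 : i + Phi j < (fibWord (j+1) ++ fibWord j).length := by omega
  have hi2 : i + Phi j < (fibWord j ++ fibWord (j+1)).length := by omega
  have hit : i + Phi j < ((fibWord (j+1) ++ fibWord j).take (Phi (j+2) - 2)).length := by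
    rw [length_take]; omega
  have c := take_comm j
  have hit' : i + Phi j < ((fibWord j ++ fibWord (j+1)).take (Phi (j+2) - 2)).length := by
    rw [← c]; exact hit
  have hiF : i < Phi (j+1) := by omega
  have e1 : fibInf (i + Phi j) = (fibWord (j+1) ++ fibWord j)[i + Phi j]'hi1 := by
    rw [fibInf_eq hip, fibWord_succ_succ, getD_eq_getElem]
  have e2 : (fibWord (j+1) ++ fibWord j)[i + Phi j]'hi1 =
      (fibWord j ++ fibWord (j+1))[i + Phi j]'hi2 := by
    calc (fibWord (j+1) ++ fibWord j)[i + Phi j]'hi1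
        = ((fibWord (j+1) ++ fibWord j).take (Phi (j+2) - 2))[i + Phi j]'hit := by
          rw [List.getElem_take]
      _ = ((fibWord j ++ fibWord (j+1)).take (Phi (j+2) - 2))[i + Phi j]'hit' := by
          simp only [c]
      _ = (fibWord j ++ fibWord (j+1))[i + Phi j]'hi2 := by
          rw [List.getElem_take]
  have e3 : (fibWord j ++ fibWord (j+1))[i + Phi j]'hi2 =
      (fibWord (j+1))[i]'(hiF) := by
    rw [List.getElem_append_right (show (fibWord j).length ≤ i + Phi j from by
      show Phi j ≤ _; omega)]
    congr 1
    show i + Phi j - (fibWord j).length = i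
    show i + Phi j - Phi j = i
    omega
  have e4 : (fibWord (j+1))[i]'(hiF) = fibInf i := by
    rw [fibInf_eq hiF, getD_eq_getElem _ _ hiF]
  rw [e1, e2, e3, e4]

lemma shift_fib {j t : ℕ} (ht : t < Phi j) : fibInf (Phi (j+1) + t) = fibInf t := by
  have h1 : Phi (j+1) + t < Phi (j+2) := by have := Phi_add j; omega
  rw [fibInf_eq h1, fibInf_eq ht, fibWord_succ_succ]
  rw [getD_eq_getElem _ _ (by show _ < Phi (j+2); omega), getD_eq_getElem _ _ (by exact ht)]
  rw [List.getElem_append_right (by show (fibWord (j+1)).length ≤ _; show Phi (j+1) ≤ _; omega)]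
  congr 1
  show Phi (j+1) + t - (fibWord (j+1)).length = t
  show Phi (j+1) + t - Phi (j+1) = t
  omega

lemma fw_sub {n p q : ℕ} (hq : 1 ≤ q) (hqp : q ≤ p) (hn : p + q ≤ n)
    (hp : HasPer n p) (hq' : HasPer n q) : HasPer n (p - q) := by
  intro i hi
  rcases Nat.lt_or_ge (i + p) n with h|h
  · have e1 := hp i h
    have e2 := hq' (i + (p - q)) (by omega)
    have : i + (p - q) + q = i + p := by omega
    rw [this] at e2
    rw [← e2, e1]
  · have hiq : q ≤ i := by omega
    have e1 := hq' (i - q) (by omega)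
    have : i - q + q = i := by omega
    rw [this] at e1
    have e2 := hp (i - q) (by omega)
    have : i - q + p = i + (p - q) := by omega
    rw [this] at e2
    rw [e2, e1]

lemma fw_gcd : ∀ p q n : ℕ, 1 ≤ q → q ≤ p → p + q ≤ n →
    HasPer n p → HasPer n q → HasPer n (Nat.gcd p q) := by
  intro p
  induction p using Nat.strong_induction_on with
  | _ p ih =>
    intro q n hq hqp hn hp hq'
    rcases eq_or_lt_of_le hqp with heq|hlt
    · subst heq; rwa [Nat.gcd_self]
    · have hr : 1 ≤ p - q := by omega
      have hper_r : HasPer n (p - q) := fw_sub hq hqp hn hp hq'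
      have hgcd : Nat.gcd p q = Nat.gcd (p - q) q := by
        apply Nat.dvd_antisymm
        · exact Nat.dvd_gcd (Nat.dvd_sub (Nat.gcd_dvd_left _ _) (Nat.gcd_dvd_right _ _))
            (Nat.gcd_dvd_right _ _)
        · refine Nat.dvd_gcd ?_ (Nat.gcd_dvd_right _ _)
          have := Nat.dvd_add (Nat.gcd_dvd_left (p-q) q) (Nat.gcd_dvd_right (p-q) q)
          rwa [Nat.sub_add_cancel hqp] at this
      rw [hgcd]
      rcases Nat.le_total q (p - q) with h|h
      · exact ih (p - q) (by omega) q n hq h (by omega) hper_r hq'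
      · rw [Nat.gcd_comm]
        exact ih q (by omega) (p - q) n hr h (by omega) hq' hper_r

lemma fibInf_zero : fibInf 0 = false := rfl
lemma fibInf_one : fibInf 1 = true := rfl

/-- No small periods: prefixes of length `≥ Φ_{i+2}` have no period `< Φ_i`. -/
lemma no_small_per : ∀ i q n : ℕ, 1 ≤ q → q < Phi i → Phi (i+2) ≤ n → HasPer n q → False := by
  intro i
  induction i using Nat.strong_induction_on with
  | _ i ih =>
    intro q n hq1 hqi hn hper
    match i, hqi with
    | 0, hqi => rw [Phi_zero] at hqi; omega
    | 1, hqi =>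
      rw [Phi_one] at hqi
      have hq : q = 1 := by omega
      subst hq
      have h5 : Phi 3 ≤ n := hn
      have : (5 : ℕ) ≤ n := le_trans (by decide) h5
      have := hper 0 (by omega)
      rw [fibInf_one, fibInf_zero] at this
      exact Bool.noConfusion this
    | (i+2), hqi =>
      -- use period Phi (i+2) on prefix of length Phi (i+4) - 2
      have hn4 : Phi (i+4) ≤ n := hn
      have hL : Phi (i+4) - 2 ≤ n := by omega
      have hper' : HasPer (Phi (i+4) - 2) q := hper.mono hL
      have hperF : HasPer (Phi (i+4) - 2) (Phi (i+2)) := per_fib (i+2)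
      have hadd3 : Phi (i+3) = Phi (i+2) + Phi (i+1) := Phi_add (i+1)
      have hadd4 : Phi (i+4) = Phi (i+3) + Phi (i+2) := Phi_add (i+2)
      have hadd2 : Phi (i+2) = Phi (i+1) + Phi i := Phi_add i
      have hP1 : 2 ≤ Phi (i+1) := by
        have := Phi_ge (i+1); omega
      have hlen : Phi (i+2) + q ≤ Phi (i+4) - 2 := by omega
      have hg := fw_gcd (Phi (i+2)) q (Phi (i+4) - 2) hq1 (le_of_lt hqi)
        (by omega) hperF hper'
      set g := Nat.gcd (Phi (i+2)) q with hgdef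
      have hgdvd : g ∣ Phi (i+2) := Nat.gcd_dvd_left _ _
      have hgq : g ≤ q := Nat.le_of_dvd (by omega) (Nat.gcd_dvd_right _ _)
      have hg1 : 1 ≤ g := Nat.pos_of_ne_zero (by
        intro h0
        have := Nat.eq_zero_of_gcd_eq_zero_right h0
        omega)
      have hPpos := Phi_pos (i+2)
      have hghalf : 2 * g ≤ Phi (i+2) := by
        rcases hgdvd with ⟨c, hc⟩
        rw [Nat.mul_comm] at hc
        rcases Nat.lt_or_ge c 2 with hc2|hc2
        · interval_cases c <;> simp at hc <;> omega
        · have h2g : 2 * g ≤ c * g := Nat.mul_le_mul_right g hc2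
          omega
      have hlt1 : Phi i < Phi (i+1) := Phi_lt i
      have hgsmall : g < Phi (i+1) := by omega
      exact ih (i+1) (by omega) g (Phi (i+4) - 2) hg1 hgsmall
        (show Phi (i+3) ≤ Phi (i+4) - 2 by omega) hg

/-- Key gap lemma: a short border of a Fibonacci prefix of length `< Φ_{m+5}`
has length `< Φ_{m+3}`. -/
lemma key_gap (m b n : ℕ) (h2 : 2 * b < n) (hn : n < Phi (m+5)) (hbig : Phi (m+3) ≤ b)
    (hbord : ∀ i < b, fibInf ((n - b) + i) = fibInf i) : False := by
  set p := n - b with hp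
  have hbn : b ≤ n := by omega
  have hbp : b < p := by omega
  have hadd5 : Phi (m+5) = Phi (m+4) + Phi (m+3) := Phi_add (m+3)
  have hadd4 : Phi (m+4) = Phi (m+3) + Phi (m+2) := Phi_add (m+2)
  have hadd3 : Phi (m+3) = Phi (m+2) + Phi (m+1) := Phi_add (m+1)
  have hlt2 : Phi (m+2) < Phi (m+3) := Phi_lt (m+2)
  have hlt1 : Phi (m+1) < Phi (m+2) := Phi_lt (m+1)
  have hP2 : 2 ≤ Phi (m+1) := by have := Phi_ge (m+1); omega
  have hperp : HasPer n p := by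
    intro i hi
    have hib : i < b := by omega
    have := hbord i hib
    rwa [Nat.add_comm p i] at this
  -- p ≤ Phi (m+4) - 1
  have hpbound : p ≤ Phi (m+4) - 1 := by omega
  set L : ℕ := min n (Phi (m+5) - 2) with hL
  have hperpL : HasPer L p := hperp.mono (min_le_left _ _)
  have hperF : HasPer L (Phi (m+3)) := (per_fib (m+3)).mono (min_le_right _ _)
  have hLle1 : L ≤ n := min_le_left _ _
  have hLle2 : L ≤ Phi (m+5) - 2 := min_le_right _ _
  rcases le_or_gt (p + Phi (m+3)) L with hA|hB
  · -- main case: Fine-Wilf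
    have hg := fw_gcd p (Phi (m+3)) L (by omega) (by omega) hA hperpL hperF
    set g := Nat.gcd p (Phi (m+3)) with hgdef
    have hgdvdP : g ∣ Phi (m+3) := Nat.gcd_dvd_right _ _
    have hgdvdp : g ∣ p := Nat.gcd_dvd_left _ _
    have hgle : g ≤ Phi (m+3) := Nat.le_of_dvd (by omega) hgdvdP
    have hg1 : 1 ≤ g := Nat.pos_of_ne_zero (by
      intro h0
      have := Nat.eq_zero_of_gcd_eq_zero_left h0
      omega)
    rcases eq_or_lt_of_le hgle with heq|hlt
    · -- g = Phi (m+3) divides p, but Phi (m+3) < p < 2 * Phi (m+3)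
      rw [heq] at hgdvdp
      rcases hgdvdp with ⟨c, hc⟩
      rcases Nat.lt_or_ge c 2 with hc2|hc2
      · interval_cases c <;> simp at hc <;> omega
      · have : 2 * Phi (m+3) ≤ Phi (m+3) * c := by
          calc 2 * Phi (m+3) = Phi (m+3) * 2 := by ring
          _ ≤ Phi (m+3) * c := Nat.mul_le_mul_left _ hc2
        omega
    · -- g a proper divisor of Phi (m+3): small period, contradiction with no_small_per
      have hghalf : 2 * g ≤ Phi (m+3) := by
        rcases hgdvdP with ⟨c, hc⟩
        rw [Nat.mul_comm] at hc
        rcases Nat.lt_or_ge c 2 with hc2|hc2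
        · interval_cases c <;> simp at hc <;> omega
        · have h2g : 2 * g ≤ c * g := Nat.mul_le_mul_right g hc2
          omega
      have hgsmall : g < Phi (m+2) := by omega
      have hLbig : Phi (m+4) ≤ L := by omega
      exact no_small_per (m+2) g L hg1 hgsmall (show Phi (m+2+2) ≤ L from hLbig) hg
  · -- boundary case: n = Phi (m+5) - 1, p = Phi (m+4) - 1, b = Phi (m+3)
    have hLn : p + Phi (m+3) ≤ n := by omega
    have hLeq : L = Phi (m+5) - 2 := by omega
    have hnval : n = Phi (m+5) - 1 := by omega
    have hpval : p = Phi (m+4) - 1 := by omega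
    have h1b : 1 < b := by omega
    have e1 := hbord 1 h1b
    rw [fibInf_one] at e1
    have : p + 1 = Phi (m+4) + 0 := by omega
    rw [this, shift_fib (show 0 < Phi (m+3) by omega)] at e1
    rw [fibInf_zero] at e1
    exact Bool.noConfusion e1

lemma ziminWord_length (k : ℕ) : (ziminWord k).length + 1 = 2 ^ k := by
  induction k with
  | zero => rfl
  | succ k ih => show (ziminWord k ++ k :: ziminWord k).length + 1 = 2^(k+1); simp; omega

lemma flatMap_length_ge {α : Type*} (h : ℕ → List α) (hne : ∀ i, h i ≠ []) (l : List ℕ) :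
    l.length ≤ (l.flatMap h).length := by
  induction l with
  | nil => simp
  | cons a l ih =>
    simp only [List.flatMap_cons, List.length_append, List.length_cons]
    have : 1 ≤ (h a).length := List.length_pos_iff.mpr (hne a)
    omega

lemma IsZiminImage.le_length {α : Type*} {k : ℕ} {w : List α} (h : IsZiminImage k w) :
    k ≤ w.length := by
  obtain ⟨f, hf, hw⟩ := h
  have h1 := flatMap_length_ge f hf (ziminWord k)
  have h2 := ziminWord_length k
  have h3 := @Nat.lt_two_pow_self k
  rw [hw]
  omega

lemma zimin_bddAbove {α : Type*} (w : List α) : BddAbove {k | IsZiminImage k w} :=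
  ⟨w.length, fun _ hk => hk.le_length⟩

lemma IsZiminImage.le_ziminType {α : Type*} {k : ℕ} {w : List α} (h : IsZiminImage k w) :
    k ≤ ziminType w := le_csSup (zimin_bddAbove w) h

lemma isZiminImage_one {α : Type*} {w : List α} (hw : w ≠ []) : IsZiminImage 1 w := by
  refine ⟨fun _ => w, fun _ => hw, ?_⟩
  show w = ([] ++ 0 :: []).flatMap (fun _ => w)
  simp

lemma ziminType_le {α : Type*} {w : List α} {m : ℕ}
    (h : ∀ k, IsZiminImage k w → k ≤ m) : ziminType w ≤ m := by
  unfold ziminType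
  rcases Set.eq_empty_or_nonempty {k | IsZiminImage k w} with he|hne
  · rw [he, csSup_empty]; exact Nat.zero_le m
  · exact csSup_le hne h

lemma ziminType_mem {α : Type*} {w : List α} (hw : w ≠ []) :
    IsZiminImage (ziminType w) w := by
  have : ({k | IsZiminImage k w}).Nonempty := ⟨1, isZiminImage_one hw⟩
  exact Nat.sSup_mem this (zimin_bddAbove w)

lemma isZiminImage_zero {α : Type*} {w : List α} (h : IsZiminImage 0 w) : w = [] := by
  obtain ⟨f, _, hw⟩ := h
  simpa [ziminWord] using hw

lemma isZiminImage_split {α : Type*} {k : ℕ} {w : List α} (h : IsZiminImage (k+1) w) :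
    ∃ B u : List α, IsZiminImage k B ∧ u ≠ [] ∧ w = B ++ u ++ B := by
  obtain ⟨f, hf, hw⟩ := h
  refine ⟨(ziminWord k).flatMap f, f k, ⟨f, hf, rfl⟩, hf k, ?_⟩
  rw [hw]
  show (ziminWord k ++ k :: ziminWord k).flatMap f = _
  rw [List.flatMap_append, List.flatMap_cons]
  simp [List.append_assoc]

lemma ziminWord_mem_lt {k i : ℕ} (h : i ∈ ziminWord k) : i < k := by
  induction k with
  | zero => simp [ziminWord] at h
  | succ k ih =>
    have : i ∈ ziminWord k ++ k :: ziminWord k := h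
    simp only [List.mem_append, List.mem_cons] at this
    rcases this with h'|h'|h'
    · exact Nat.lt_succ_of_lt (ih h')
    · omega
    · exact Nat.lt_succ_of_lt (ih h')

lemma flatMap_congr_mem {α : Type*} {l : List ℕ} {f g : ℕ → List α}
    (h : ∀ i ∈ l, f i = g i) : l.flatMap f = l.flatMap g := by
  induction l with
  | nil => rfl
  | cons a l ih =>
    rw [List.flatMap_cons, List.flatMap_cons, h a (by simp),
      ih (fun i hi => h i (by simp [hi]))]

lemma isZiminImage_sandwich {α : Type*} {k : ℕ} {B u : List α}
    (hB : IsZiminImage k B) (hu : u ≠ []) : IsZiminImage (k+1) (B ++ u ++ B) := by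
  obtain ⟨f, hf, hBf⟩ := hB
  classical
  refine ⟨fun i => if i = k then u else f i, fun i => by by_cases h : i = k <;> simp [h, hu, hf i], ?_⟩
  show _ = (ziminWord k ++ k :: ziminWord k).flatMap _
  rw [List.flatMap_append, List.flatMap_cons]
  have he : (ziminWord k).flatMap (fun i => if i = k then u else f i) = (ziminWord k).flatMap f :=
    flatMap_congr_mem (fun i hi => by
      have := ziminWord_mem_lt hi
      simp [Nat.ne_of_lt this])
  rw [he, ← hBf]
  simp [List.append_assoc]

lemma isZiminImage_pow_le {α : Type*} {k : ℕ} {w : List α} (h : IsZiminImage k w) :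
    2 ^ k ≤ w.length + 1 := by
  obtain ⟨f, hf, hw⟩ := h
  have h1 := flatMap_length_ge f hf (ziminWord k)
  have h2 := ziminWord_length k
  rw [hw]
  omega

lemma fibWord_step (r : ℕ) : ∃ s : List Bool, s ≠ [] ∧ fibWord (r+1) = fibWord r ++ s := by
  match r with
  | 0 => exact ⟨[true], by simp, rfl⟩
  | r+1 => exact ⟨fibWord r, (List.length_pos_iff).mp (Phi_pos r), rfl⟩

lemma fib_zimin : ∀ m : ℕ, IsZiminImage (m+1) (fibWord (2*m)) := by
  intro m
  induction m with
  | zero => exact isZiminImage_one (by decide)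
  | succ m ih =>
    obtain ⟨s, hs, hstep⟩ := fibWord_step (2*m)
    have h1 : fibWord (2*(m+1)) = fibWord (2*m) ++ s ++ fibWord (2*m) := by
      have : 2*(m+1) = (2*m+1)+1 := by ring
      rw [this]
      show fibWord (2*m+1) ++ fibWord (2*m) = _
      rw [hstep]
    rw [h1]
    exact isZiminImage_sandwich ih hs

lemma border_fibInf {b n : ℕ} (hbn : b ≤ n) (hsuf : fibPrefix b <:+ fibPrefix n) :
    ∀ i < b, fibInf ((n - b) + i) = fibInf i := by
  intro i hi
  obtain ⟨t, ht⟩ := hsuf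
  have hlt : t.length = n - b := by
    have := congrArg List.length ht
    simp [fibPrefix_length] at this
    omega
  have hidx : n - b + i < n := by omega
  have e1 : (fibPrefix n)[n - b + i]'(by rw [fibPrefix_length]; exact hidx) = fibInf (n - b + i) :=
    fibPrefix_getElem hidx
  have e2 : (fibPrefix n)[n - b + i]'(by rw [fibPrefix_length]; exact hidx) =
      (fibPrefix b)[i]'(by rw [fibPrefix_length]; exact hi) := by
    have hlt2 : n - b + i < (t ++ fibPrefix b).length := by
      rw [ht, fibPrefix_length]; exact hidx
    have e3 : (fibPrefix n)[n - b + i]'(by rw [fibPrefix_length]; exact hidx) =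
        (t ++ fibPrefix b)[n - b + i]'hlt2 := List.getElem_of_eq ht.symm _
    rw [e3, List.getElem_append_right (by omega)]
    congr 1
    omega
  rw [← e1, e2, fibPrefix_getElem hi]

lemma main_upper : ∀ j, ∀ n, n < Phi j → ∀ k, IsZiminImage k (fibPrefix n) → 2*k ≤ j + 6 := by
  intro j
  induction j using Nat.strong_induction_on with
  | _ j ih =>
    intro n hn k hk
    have hlen : 2^k ≤ n + 1 := by
      have := isZiminImage_pow_le hk
      rwa [fibPrefix_length] at this
    rcases le_or_gt j 1 with hj1 | hj1
    · -- j ≤ 1 : n ≤ 1, k ≤ 1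
      have hn1 : n ≤ 1 := by
        have : Phi j ≤ Phi 1 := Phi_mono hj1
        rw [Phi_one] at this; omega
      have hk1 : k ≤ 1 := by
        by_contra hcon
        have : 2^2 ≤ 2^k := Nat.pow_le_pow_right (by norm_num) (by omega)
        omega
      omega
    rcases le_or_gt j 6 with hj6 | hj7
    · -- 2 ≤ j ≤ 6 : n ≤ 20, k ≤ 4
      have hn1 : n < 21 := by
        have : Phi j ≤ Phi 6 := Phi_mono hj6
        have h6 : Phi 6 = 21 := by decide
        omega
      have hk1 : k ≤ 4 := by
        by_contra hcon
        have : 2^5 ≤ 2^k := Nat.pow_le_pow_right (by norm_num) (by omega)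
        omega
      omega
    · -- j ≥ 7
      obtain ⟨m, rfl⟩ : ∃ m, j = m + 7 := ⟨j - 7, by omega⟩
      match k, hk with
      | 0, _ => omega
      | (k+1), hk =>
        obtain ⟨B, u, hB, hu, hw⟩ := isZiminImage_split hk
        set b := B.length with hbdef
        have hlen2 : n = b + u.length + b := by
          have := congrArg List.length hw
          simp [fibPrefix_length] at this
          omega
        have hupos : 1 ≤ u.length := List.length_pos_iff.mpr hu
        have hb2 : 2 * b < n := by omega
        have hbn : b ≤ n := by omega
        have hBeq : B = fibPrefix b := by
          have h1 : (fibPrefix n).take b = B := by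
            rw [hw, List.append_assoc, List.take_left]
          rw [← h1, fibPrefix_take hbn]
        have hsuf : fibPrefix b <:+ fibPrefix n := by
          rw [hw, hBeq]
          exact (List.suffix_append _ _)
        rcases lt_or_ge b (Phi (m+5)) with hsmall | hbig
        · have hB' : IsZiminImage k (fibPrefix b) := hBeq ▸ hB
          have := ih (m+5) (by omega) b hsmall k hB'
          omega
        · exact (key_gap (m+2) b n hb2 hn hbig (border_fibInf hbn hsuf)).elim

lemma goldenR_eq : goldenR = Real.goldenRatio := rfl

lemma one_lt_goldenR : 1 < goldenR := by rw [goldenR_eq]; exact Real.one_lt_goldenRatio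

lemma log_goldenR_pos : 0 < Real.log goldenR := Real.log_pos one_lt_goldenR

lemma goldenR_sq : goldenR ^ 2 = goldenR + 1 := by rw [goldenR_eq]; exact Real.goldenRatio_sq

lemma goldenR_pow_rec (j : ℕ) : goldenR ^ (j + 2) = goldenR ^ (j+1) + goldenR ^ j := by
  have h := goldenR_sq
  calc goldenR ^ (j+2) = goldenR ^ j * goldenR ^ 2 := by ring
  _ = goldenR ^ j * (goldenR + 1) := by rw [h]
  _ = goldenR ^ (j+1) + goldenR ^ j := by ring


lemma pow_le_Phi : ∀ j : ℕ, goldenR ^ j ≤ (Phi j : ℝ) := by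
  intro j
  induction j using Nat.strong_induction_on with
  | _ j ih =>
    match j with
    | 0 => simp [Phi_zero]
    | 1 =>
      rw [Phi_one, pow_one]
      push_cast
      nlinarith [goldenR_sq, one_lt_goldenR]
    | j+2 =>
      rw [goldenR_pow_rec, Phi_add]
      push_cast
      exact add_le_add (ih (j+1) (by omega)) (ih j (by omega))

lemma Phi_le_pow : ∀ j : ℕ, (Phi j : ℝ) ≤ goldenR ^ (j+1) := by
  intro j
  induction j using Nat.strong_induction_on with
  | _ j ih =>
    match j with
    | 0 =>
      rw [Phi_zero, pow_one]
      push_cast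
      linarith [one_lt_goldenR]
    | 1 =>
      rw [Phi_one]
      have : goldenR ^ (1+1) = goldenR + 1 := goldenR_sq
      rw [this]
      push_cast
      linarith [one_lt_goldenR]
    | j+2 =>
      rw [goldenR_pow_rec, Phi_add]
      push_cast
      exact add_le_add (ih (j+1) (by omega)) (ih j (by omega))

lemma ziminType_fibPrefix_le {n j : ℕ} (hn : n < Phi j) :
    2 * ziminType (fibPrefix n) ≤ j + 6 := by
  rcases Nat.eq_zero_or_pos n with h0|hpos
  · subst h0
    have : ziminType (fibPrefix 0) ≤ 0 :=
      ziminType_le (fun k hk => by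
        have := hk.le_length
        simpa [fibPrefix_length] using this)
    omega
  · have hne : fibPrefix n ≠ [] := by
      intro h
      have := congrArg List.length h
      simp [fibPrefix_length] at this
      omega
    exact main_upper j n hn _ (ziminType_mem hne)

lemma ziminType_fibWord_ge (m : ℕ) : m + 1 ≤ ziminType (fibPrefix (Phi (2*m))) := by
  rw [fibPrefix_phi]
  exact (fib_zimin m).le_ziminType

lemma aseq_nonneg (n : ℕ) : 0 ≤ aseq n := by
  unfold aseq
  apply div_nonneg (by positivity)
  apply div_nonneg _ log_goldenR_pos.le
  rcases Nat.eq_zero_or_pos n with h|h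
  · simp [h]
  · exact Real.log_natCast_nonneg n

lemma aseq_freq_ge (N : ℕ) : ∃ n ≥ N, 1/2 ≤ aseq n := by
  set m := N + 1 with hm
  refine ⟨Phi (2*m), by have := Phi_ge (2*m); omega, ?_⟩
  set n := Phi (2*m) with hn
  have hn3 : (3:ℕ) ≤ n := by have := Phi_ge (2*m); omega
  have hMn : (m:ℝ) + 1 ≤ (ziminType (fibPrefix n) : ℝ) := by
    have := ziminType_fibWord_ge m
    push_cast
    exact_mod_cast this
  set L : ℝ := Real.log n / Real.log goldenR with hL
  have hlogn_pos : 0 < Real.log n := Real.log_pos (by exact_mod_cast by omega)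
  have hLpos : 0 < L := div_pos hlogn_pos log_goldenR_pos
  have hLle : L ≤ 2*(m:ℝ)+1 := by
    rw [hL, div_le_iff₀ log_goldenR_pos]
    have h1 : (n:ℝ) ≤ goldenR ^ (2*m+1) := by
      have := Phi_le_pow (2*m)
      exact_mod_cast this
    have h2 : Real.log n ≤ Real.log (goldenR ^ (2*m+1)) := by
      apply Real.log_le_log (by exact_mod_cast by omega : (0:ℝ) < n) h1
    rw [Real.log_pow] at h2
    push_cast at h2 ⊢
    linarith
  have step1 : (1:ℝ)/2 ≤ ((m:ℝ)+1) / (2*(m:ℝ)+1) := by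
    rw [div_le_div_iff₀ (by norm_num) (by positivity)]
    push_cast
    linarith
  have step2 : ((m:ℝ)+1) / (2*(m:ℝ)+1) ≤ ((m:ℝ)+1) / L :=
    div_le_div_of_nonneg_left (by positivity) hLpos hLle
  have step3 : ((m:ℝ)+1) / L ≤ (ziminType (fibPrefix n) : ℝ) / L :=
    (div_le_div_iff_of_pos_right hLpos).mpr hMn
  calc (1:ℝ)/2 ≤ _ := step1
  _ ≤ _ := step2
  _ ≤ _ := step3
  _ = aseq n := rfl

lemma aseq_le (n : ℕ) (hn : 2 ≤ n) :
    aseq n ≤ 1/2 + (7/2) * (Real.log goldenR / Real.log n) := by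
  have hex : ∃ j, n < Phi j := ⟨n, by have := Phi_ge n; omega⟩
  obtain ⟨j, hnj, hmin⟩ : ∃ j, n < Phi j ∧ ∀ i < j, ¬ n < Phi i :=
    ⟨Nat.find hex, Nat.find_spec hex, fun i hi => Nat.find_min hex hi⟩
  have hj1 : j ≠ 0 := by
    intro h
    rw [h, Phi_zero] at hnj
    omega
  obtain ⟨j', rfl⟩ : ∃ j', j = j' + 1 := ⟨j - 1, by omega⟩
  have hlow : Phi j' ≤ n := by
    by_contra h
    exact hmin j' (by omega) (by omega)
  have hM := ziminType_fibPrefix_le hnj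
  set M := ziminType (fibPrefix n) with hMdef
  set L : ℝ := Real.log n / Real.log goldenR with hL
  have hlogn_pos : 0 < Real.log n := Real.log_pos (by exact_mod_cast by omega)
  have hLpos : 0 < L := div_pos hlogn_pos log_goldenR_pos
  have hjL : (j' : ℝ) ≤ L := by
    rw [hL, le_div_iff₀ log_goldenR_pos]
    have h1 : goldenR ^ j' ≤ (n:ℝ) := le_trans (pow_le_Phi j') (by exact_mod_cast hlow)
    have h2 : Real.log (goldenR ^ j') ≤ Real.log n :=
      Real.log_le_log (pow_pos (by linarith [one_lt_goldenR]) j') h1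
    rw [Real.log_pow] at h2
    push_cast at h2 ⊢
    linarith
  have hM2 : (M:ℝ) ≤ (L + 7) / 2 := by
    have : (2:ℝ) * M ≤ (j':ℝ) + 7 := by exact_mod_cast hM
    linarith
  have : aseq n = (M:ℝ) / L := rfl
  rw [this]
  have step : (M:ℝ) / L ≤ ((L+7)/2) / L :=
    (div_le_div_iff_of_pos_right hLpos).mpr hM2
  apply le_trans step
  have hinv : 1 / L = Real.log goldenR / Real.log n := by
    rw [hL, one_div_div]
  rw [← hinv]
  have heq : (L+7)/2/L = 1/2 + 7/2*(1/L) := by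
    field_simp
  rw [heq]

lemma tendsto_gseq :
    Tendsto (fun n : ℕ => 1/2 + (7/2) * (Real.log goldenR / Real.log n)) atTop
      (nhds (1/2)) := by
  have hlog : Tendsto (fun n : ℕ => Real.log n) atTop atTop :=
    Real.tendsto_log_atTop.comp tendsto_natCast_atTop_atTop
  have h0 : Tendsto (fun n : ℕ => Real.log goldenR / Real.log n) atTop (nhds 0) :=
    Tendsto.div_atTop tendsto_const_nhds hlog
  have := (h0.const_mul (7/2 : ℝ)).const_add (1/2 : ℝ)
  simpa using this


/-- Corollary 1 (part): `limsup_{n→∞} ZFib[n] / log_φ n = 1/2`. -/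
theorem limsup_aseq : Filter.limsup aseq Filter.atTop = 1 / 2 := by
  set g : ℕ → ℝ := fun n => 1/2 + (7/2) * (Real.log goldenR / Real.log n) with hg
  have hgb : IsBoundedUnder (· ≤ ·) atTop g := tendsto_gseq.isBoundedUnder_le
  have hle : aseq ≤ᶠ[atTop] g := by
    filter_upwards [eventually_ge_atTop 2] with n hn
    exact aseq_le n hn
  have hab : IsBoundedUnder (· ≤ ·) atTop aseq := hgb.mono_le hle
  have hcb : IsCoboundedUnder (· ≤ ·) atTop aseq :=
    isCoboundedUnder_le_of_le atTop (fun n => aseq_nonneg n)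
  apply _root_.le_antisymm
  · calc limsup aseq atTop ≤ limsup g atTop := limsup_le_limsup hle hcb hgb
    _ = 1/2 := tendsto_gseq.limsup_eq
  · apply le_limsup_of_frequently_le _ hab
    rw [frequently_atTop]
    intro N
    obtain ⟨n, hn, h⟩ := aseq_freq_ge N
    exact ⟨n, hn, h⟩
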